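/- arXiv:1808.05090 — 2 statements merged into one kernel-verified Lean document; each statement's English description precedes it below -/
import Mathlib

section
/- Let Φ be an affine root system and c a Coxeter element in its Weyl group. The c-orbit of a root β ∈ Φ is finite if and only if β lies in U_c, the hyperplane spanned by the eigenvectors of c. -/
open scoped BigOperators

noncomputable section

/-- A symmetrizable generalized Cartan matrix of affine type, together with the
coefficient vector `dz` of the primitive positive imaginary root `δ` spanning the
(one dimensional) kernel of the associated symmetric bilinear form. -/
structure AffineGCM (n : ℕ) where
  /-- the generalized Cartan matrix -/
  a : Matrix (Fin n) (Fin n) ℤ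
  /-- symmetrizing factors -/
  d : Fin n → ℝ
  diag : ∀ i, a i i = 2
  offdiag : ∀ i j, i ≠ j → a i j ≤ 0
  d_pos : ∀ i, 0 < d i
  symmetrizable : ∀ i j, d i * (a i j : ℝ) = d j * (a j i : ℝ)
  /-- `K` is positive semidefinite (on the real span of the simple roots) -/
  posSemidef : ∀ g : Fin n → ℝ, 0 ≤ ∑ i, ∑ j, g i * g j * (d i * (a i j : ℝ))
  /-- `K` is not positive definite -/
  not_posDef : ∃ g : Fin n → ℝ, g ≠ 0 ∧ ∑ i, ∑ j, g i * g j * (d i * (a i j : ℝ)) = 0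
  /-- the restriction of `K` to the span of every proper subset of the simple roots
  is positive definite -/
  proper_posDef : ∀ J : Finset (Fin n), J ≠ Finset.univ →
    ∀ g : Fin n → ℝ, (∀ i, i ∉ J → g i = 0) → g ≠ 0 →
      0 < ∑ i, ∑ j, g i * g j * (d i * (a i j : ℝ))
  /-- coordinates of the positive imaginary root `δ` in the basis of simple roots -/
  dz : Fin n → ℤ
  dz_pos : ∀ i, 0 < dz i
  /-- `δ` is the imaginary root closest to the origin: its coordinates are coprime -/
  dz_prim : Finset.univ.gcd dz = 1
  /-- `δ` spans the kernel of `K` -/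
  dz_ker : ∀ j, ∑ i, (dz i : ℝ) * (d i * (a i j : ℝ)) = 0

namespace AffineGCM

variable {n : ℕ}

/-- The ambient vector space `V`, with the simple roots as standard basis. -/
abbrev V (n : ℕ) := Fin n → ℂ

/-- the simple root `α i` (the `i`-th standard basis vector) -/
def α (i : Fin n) : V n := Pi.single i 1

/-- a vector is *positive* if it lies in the nonnegative real span of the simple roots -/
def IsPosRoot (v : V n) : Prop := ∀ i, 0 ≤ (v i).re ∧ (v i).im = 0

/-- a vector is *negative* if it lies in the nonpositive real span of the simple roots -/
def IsNegRoot (v : V n) : Prop := ∀ i, (v i).re ≤ 0 ∧ (v i).im = 0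

/-- the `g`-orbit of `x`: all `g ^ k • x` for integers `k` -/
def orbit (g : V n ≃ₗ[ℂ] V n) (x : V n) : Set (V n) := Set.range fun k : ℤ => (g ^ k) x

/-- `U g`: the span of all eigenvectors of `g`, i.e. the direct sum of its eigenspaces -/
def eigSpan (g : V n ≃ₗ[ℂ] V n) : Submodule ℂ (V n) :=
  ⨆ μ : ℂ, Module.End.eigenspace (g : Module.End ℂ (V n)) μ

/-- the span `V_fin` of the simple roots other than `α aff` -/
def Vfin (aff : Fin n) : Submodule ℂ (V n) :=
  Submodule.span ℂ (α '' {i : Fin n | i ≠ aff})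

variable (C : AffineGCM n)

/-- the simple coroot `α i ^ ∨ = (d i)⁻¹ • α i` -/
def coroot (i : Fin n) : V n := ((C.d i : ℂ))⁻¹ • α i

/-- The symmetric bilinear form `K`, determined by `K (coroot i) (α j) = a i j`,
that is, `K (α i) (α j) = d i * a i j`. -/
def K : V n →ₗ[ℂ] V n →ₗ[ℂ] ℂ :=
  LinearMap.mk₂ ℂ
    (fun x y => ∑ i, ∑ j, x i * y j * ((C.d i : ℂ) * (C.a i j : ℂ)))
    (fun x x' y => by
      simp only [Pi.add_apply, add_mul, Finset.sum_add_distrib])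
    (fun r x y => by
      simp only [Pi.smul_apply, smul_eq_mul, Finset.mul_sum]
      exact Finset.sum_congr rfl fun i _ => Finset.sum_congr rfl fun j _ => by ring)
    (fun x y y' => by
      simp only [Pi.add_apply, mul_add, add_mul, Finset.sum_add_distrib])
    (fun r x y => by
      simp only [Pi.smul_apply, smul_eq_mul, Finset.mul_sum]
      exact Finset.sum_congr rfl fun i _ => Finset.sum_congr rfl fun j _ => by ring)

/-- the linear map `v ↦ v - K x v • y`; reflections are special cases -/
def reflMap (x y : V n) : V n →ₗ[ℂ] V n where
  toFun v := v - C.K x v • y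
  map_add' u v := by simp only [map_add, add_smul]; abel
  map_smul' r u := by simp only [map_smul, smul_eq_mul, RingHom.id_apply, smul_sub, smul_smul]

lemma reflMap_apply (x y v : V n) : C.reflMap x y v = v - C.K x v • y := rfl

/-- the simple reflection `s i` as a linear endomorphism -/
def sLin (i : Fin n) : V n →ₗ[ℂ] V n := C.reflMap (C.coroot i) (α i)

lemma K_α_α (i j : Fin n) : C.K (α i) (α j) = (C.d i : ℂ) * (C.a i j : ℂ) := by
  simp [K, α, LinearMap.mk₂_apply, Pi.single_apply, ite_mul, zero_mul,
    Finset.sum_ite_eq', Finset.mem_univ]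

lemma K_coroot_α (i j : Fin n) : C.K (C.coroot i) (α j) = (C.a i j : ℂ) := by
  have hd : (C.d i : ℂ) ≠ 0 := by exact_mod_cast ne_of_gt (C.d_pos i)
  simp only [coroot, map_smul, LinearMap.smul_apply, smul_eq_mul, K_α_α]
  field_simp

lemma sLin_invol (i : Fin n) (v : V n) : C.sLin i (C.sLin i v) = v := by
  have h2 : C.K (C.coroot i) (α i) = 2 := by
    rw [K_coroot_α, C.diag]; norm_num
  simp only [sLin, reflMap_apply, map_sub, map_smul, h2, smul_eq_mul]
  module

/-- the simple reflection `s i` -/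
def s (i : Fin n) : V n ≃ₗ[ℂ] V n :=
  LinearEquiv.ofLinear (C.sLin i) (C.sLin i)
    (LinearMap.ext fun v => C.sLin_invol i v) (LinearMap.ext fun v => C.sLin_invol i v)

/-- the Weyl group `W`, as a subgroup of the group of linear automorphisms of `V` -/
def Wgroup : Subgroup (V n ≃ₗ[ℂ] V n) := Subgroup.closure (Set.range C.s)

/-- the Coxeter element `c = s 1 * s 2 * ⋯ * s n` -/
def cox : V n ≃ₗ[ℂ] V n := (List.ofFn C.s).prod

/-- the positive imaginary root `δ` -/
def δv : V n := fun i => ((C.dz i : ℤ) : ℂ)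

/-- the set of real roots: `W`-images of the simple roots -/
def realRoots : Set (V n) := {v | ∃ w ∈ C.Wgroup, ∃ i, w (α i) = v}

/-- the root system `Φ`: real roots together with the imaginary roots `k • δ`, `k ≠ 0` -/
def Φ : Set (V n) := C.realRoots ∪ {v | ∃ k : ℤ, k ≠ 0 ∧ v = (k : ℂ) • C.δv}

/-- `T→ = {α 1, s 1 α 2, …, s 1 ⋯ s (n-1) α n}` -/
def Tproj : Set (V n) :=
  Set.range fun k : Fin n => ((List.ofFn C.s).take k.val).prod (α k)

/-- `T← = {α n, s n α (n-1), …, s n ⋯ s 2 α 1}` -/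
def Tinj : Set (V n) :=
  Set.range fun k : Fin n => ((List.ofFn C.s).reverse.take (n - 1 - k.val)).prod (α k)

/-- `Φ_fin`, the finite root system `Φ ∩ V_fin` -/
def Φfin (aff : Fin n) : Set (V n) := C.Φ ∩ (Vfin aff : Set (V n))

/-- the root `θ = δ - [δ : α aff] • α aff` of `Φ_fin` -/
def θv (aff : Fin n) : V n := C.δv - ((C.dz aff : ℤ) : ℂ) • α aff

/-- the reflection `t β : v ↦ v - K (β^∨) v • β` in a (real) root `β`,
where `β^∨ = (2 / K β β) • β` -/
def tRefl (β : V n) : V n →ₗ[ℂ] V n := C.reflMap ((2 / C.K β β) • β) β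

/-- `c_◁ = s 1 * ⋯ * s (aff - 1)` -/
def cleft (aff : Fin n) : V n →ₗ[ℂ] V n := ((List.ofFn C.sLin).take aff.val).prod

/-- `c_▷ = s (aff + 1) * ⋯ * s n` -/
def cright (aff : Fin n) : V n →ₗ[ℂ] V n := ((List.ofFn C.sLin).drop (aff.val + 1)).prod

/-- `Υ^fin = Φ_fin ∩ U c` -/
def Υfin (aff : Fin n) : Set (V n) := C.Φfin aff ∩ (eigSpan C.cox : Set (V n))

/-- `B` is a simple system for a set `Θ` of roots: a linearly independent subset of `Θ`
such that every element of `Θ` is a nonnegative or a nonpositive combination of `B`. -/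
def IsSimpleSystem (Θ : Set (V n)) (B : Finset (V n)) : Prop :=
  ↑B ⊆ Θ ∧ LinearIndependent ℂ (fun b : B => (b : V n)) ∧
    ∀ v ∈ Θ, ∃ g : V n → ℝ, ((∀ b ∈ B, 0 ≤ g b) ∨ (∀ b ∈ B, g b ≤ 0)) ∧
      v = ∑ b ∈ B, (g b : ℂ) • b

/-- two roots of `Θ` are connected if they are joined by a chain of roots of `Θ`
that are pairwise non-orthogonal (with respect to `K`) -/
def Connected (Θ : Set (V n)) (x y : V n) : Prop :=
  Relation.ReflTransGen (fun u v => u ∈ Θ ∧ v ∈ Θ ∧ C.K u v ≠ 0) x y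

/-- the irreducible component of `x` in `Θ` -/
def component (Θ : Set (V n)) (x : V n) : Set (V n) := {y | y ∈ Θ ∧ C.Connected Θ x y}

/-- a set of roots is of finite type `A` if it consists exactly of the vectors
`±(β i + β (i+1) + ⋯ + β j)` for a linearly independent family `β 1, …, β k` -/
def IsTypeA (Θ : Set (V n)) : Prop :=
  ∃ (k : ℕ) (β : Fin k → V n), LinearIndependent ℂ β ∧ (∀ i, β i ∈ Θ) ∧
    Θ = {v | ∃ i j : Fin k, i ≤ j ∧
      (v = ∑ l ∈ Finset.Icc i j, β l ∨ v = -∑ l ∈ Finset.Icc i j, β l)}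

/-- `Ω = {β 1, t (β 1) (β 2), …, t (β 1) ⋯ t (β (m-1)) (β m)}` for an ordered
tuple `β` of roots -/
def Ωset {m : ℕ} (β : Fin m → V n) : Set (V n) :=
  Set.range fun j : Fin m => (((List.ofFn fun i => C.tRefl (β i)).take j.val).prod) (β j)

/-- `s i` is initial in a Coxeter element `c` if `c` is the product of a permutation
of all the simple reflections starting with `s i` -/
def IsInitial (i : Fin n) (c : V n ≃ₗ[ℂ] V n) : Prop :=
  ∃ l : List (Fin n), (i :: l).Perm (List.finRange n) ∧ ((i :: l).map C.s).prod = c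

/-- `s i` is final in a Coxeter element `c` if `c` is the product of a permutation
of all the simple reflections ending with `s i` -/
def IsFinal (i : Fin n) (c : V n ≃ₗ[ℂ] V n) : Prop :=
  ∃ l : List (Fin n), (l ++ [i]).Perm (List.finRange n) ∧ ((l ++ [i]).map C.s).prod = c

/-- the skew-symmetric bilinear form `ω_c`, determined by
`ω_c (coroot i) (α j) = a i j` if `i > j`, `= 0` if `i = j`, `= -a i j` if `i < j` -/
def ω : V n →ₗ[ℂ] V n →ₗ[ℂ] ℂ :=
  LinearMap.mk₂ ℂ
    (fun x y => ∑ i, ∑ j, x i * y j *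
      ((if j < i then 1 else if i = j then 0 else -1) * ((C.d i : ℂ) * (C.a i j : ℂ))))
    (fun x x' y => by
      simp only [Pi.add_apply, add_mul, Finset.sum_add_distrib])
    (fun r x y => by
      simp only [Pi.smul_apply, smul_eq_mul, Finset.mul_sum]
      exact Finset.sum_congr rfl fun i _ => Finset.sum_congr rfl fun j _ => by ring)
    (fun x y y' => by
      simp only [Pi.add_apply, mul_add, add_mul, Finset.sum_add_distrib])
    (fun r x y => by
      simp only [Pi.smul_apply, smul_eq_mul, Finset.mul_sum]
      exact Finset.sum_congr rfl fun i _ => Finset.sum_congr rfl fun j _ => by ring)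

/-! ### Auxiliary lemmas -/

section Aux

variable (C : AffineGCM n)

lemma K_apply (x y : V n) :
    C.K x y = ∑ i, ∑ j, x i * y j * ((C.d i : ℂ) * (C.a i j : ℂ)) := rfl

lemma K_symm (x y : V n) : C.K x y = C.K y x := by
  rw [K_apply, K_apply, Finset.sum_comm]
  refine Finset.sum_congr rfl fun j _ => Finset.sum_congr rfl fun i _ => ?_
  have h : (C.d i : ℂ) * (C.a i j : ℂ) = (C.d j : ℂ) * (C.a j i : ℂ) := by
    exact_mod_cast C.symmetrizable i j
  rw [h]; ring

lemma s_apply (i : Fin n) (v : V n) :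
    C.s i v = v - C.K (C.coroot i) v • α i := rfl

lemma K_δ_left (x : V n) : C.K C.δv x = 0 := by
  rw [K_apply, Finset.sum_comm]
  refine Finset.sum_eq_zero fun j _ => ?_
  have h : ∑ i, ((C.dz i : ℂ)) * ((C.d i : ℂ) * (C.a i j : ℂ)) = 0 := by
    exact_mod_cast C.dz_ker j
  calc ∑ i, C.δv i * x j * ((C.d i : ℂ) * (C.a i j : ℂ))
      = x j * ∑ i, ((C.dz i : ℂ)) * ((C.d i : ℂ) * (C.a i j : ℂ)) := by
        rw [Finset.mul_sum]
        exact Finset.sum_congr rfl fun i _ => by simp only [δv]; ring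
    _ = 0 := by rw [h]; ring

lemma K_δ_right (x : V n) : C.K x C.δv = 0 := by
  rw [K_symm]; exact C.K_δ_left x

lemma s_fix_δ (i : Fin n) : C.s i C.δv = C.δv := by
  rw [s_apply]
  have : C.K (C.coroot i) C.δv = 0 := by
    rw [K_symm]
    simp [coroot, map_smul]
    rw [show C.K C.δv (α i) = 0 from C.K_δ_left _]
    simp
  rw [this]; simp

lemma s_K (i : Fin n) (x y : V n) : C.K (C.s i x) (C.s i y) = C.K x y := by
  have hd : (C.d i : ℂ) ≠ 0 := by exact_mod_cast ne_of_gt (C.d_pos i)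
  have hαα : C.K (α i) (α i) = 2 * (C.d i : ℂ) := by
    rw [K_α_α, C.diag]; push_cast; ring
  have hcx : C.K (C.coroot i) x = (C.d i : ℂ)⁻¹ * C.K (α i) x := by
    simp [coroot, map_smul]
  have hcy : C.K (C.coroot i) y = (C.d i : ℂ)⁻¹ * C.K (α i) y := by
    simp [coroot, map_smul]
  have hsymx : C.K x (α i) = C.K (α i) x := C.K_symm x (α i)
  rw [s_apply, s_apply]
  simp only [map_sub, map_smul, LinearMap.sub_apply, LinearMap.smul_apply, smul_eq_mul]
  rw [hcx, hcy, hαα, hsymx]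
  field_simp
  ring


lemma mul_apply' (e f : V n ≃ₗ[ℂ] V n) (v : V n) : (e * f) v = e (f v) := rfl

lemma listprod_fix {l : List (V n ≃ₗ[ℂ] V n)} {v : V n} (h : ∀ g ∈ l, g v = v) :
    l.prod v = v := by
  induction l with
  | nil => rfl
  | cons a l ih =>
    rw [List.prod_cons, mul_apply', ih (fun g hg => h g (List.mem_cons_of_mem a hg)),
      h a (List.mem_cons_self)]

lemma listprod_K {l : List (V n ≃ₗ[ℂ] V n)} (h : ∀ g ∈ l, ∀ x y, C.K (g x) (g y) = C.K x y) :
    ∀ x y, C.K (l.prod x) (l.prod y) = C.K x y := by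
  induction l with
  | nil => intro x y; rfl
  | cons a l ih =>
    intro x y
    rw [List.prod_cons, mul_apply', mul_apply', h a (List.mem_cons_self),
      ih (fun g hg => h g (List.mem_cons_of_mem a hg))]

/-- a vector with integer coordinates -/
def IsIntVec (v : V n) : Prop := ∀ i, ∃ z : ℤ, v i = (z : ℂ)

lemma isIntVec_α (j : Fin n) : IsIntVec (α j : V n) := by
  intro i
  by_cases h : i = j
  · exact ⟨1, by simp [α, Pi.single_apply, h]⟩
  · exact ⟨0, by simp [α, Pi.single_apply, h]⟩

lemma K_α_left (i : Fin n) (v : V n) :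
    C.K (α i) v = ∑ j, v j * ((C.d i : ℂ) * (C.a i j : ℂ)) := by
  rw [K_apply]
  rw [Finset.sum_eq_single i]
  · exact Finset.sum_congr rfl fun j _ => by simp [α, Pi.single_apply]
  · intro k _ hk
    exact Finset.sum_eq_zero fun j _ => by simp [α, Pi.single_apply, hk]
  · simp

lemma K_coroot_apply (i : Fin n) (v : V n) :
    C.K (C.coroot i) v = ∑ j, v j * (C.a i j : ℂ) := by
  have hd : (C.d i : ℂ) ≠ 0 := by exact_mod_cast ne_of_gt (C.d_pos i)
  simp only [coroot, map_smul, LinearMap.smul_apply, smul_eq_mul]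
  rw [K_α_left, Finset.mul_sum]
  refine Finset.sum_congr rfl fun j _ => ?_
  field_simp

lemma isIntVec_s (i : Fin n) {v : V n} (hv : IsIntVec v) : IsIntVec (C.s i v) := by
  classical
  set z : Fin n → ℤ := fun j => Classical.choose (hv j) with hz
  have hzv : ∀ j, v j = ((z j : ℤ) : ℂ) := fun j => Classical.choose_spec (hv j)
  have hK : C.K (C.coroot i) v = ((∑ j, z j * C.a i j : ℤ) : ℂ) := by
    rw [K_coroot_apply]
    push_cast
    exact Finset.sum_congr rfl fun j _ => by rw [hzv j]
  intro k
  refine ⟨z k - (∑ j, z j * C.a i j) * (if k = i then 1 else 0), ?_⟩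
  rw [s_apply]
  have : (v - C.K (C.coroot i) v • α i) k = v k - C.K (C.coroot i) v * (α i) k := rfl
  rw [this, hK, hzv k]
  by_cases h : k = i <;> simp [α, Pi.single_apply, h]

lemma listprod_int {l : List (V n ≃ₗ[ℂ] V n)}
    (h : ∀ g ∈ l, ∀ v, IsIntVec v → IsIntVec (g v)) :
    ∀ v, IsIntVec v → IsIntVec (l.prod v) := by
  induction l with
  | nil => intro v hv; exact hv
  | cons a l ih =>
    intro v hv
    rw [List.prod_cons, mul_apply']
    exact h a (List.mem_cons_self) _
      (ih (fun g hg => h g (List.mem_cons_of_mem a hg)) v hv)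

lemma mem_ofFn_s {g : V n ≃ₗ[ℂ] V n} (hg : g ∈ List.ofFn C.s) : ∃ i, C.s i = g := by
  rw [List.mem_ofFn] at hg
  exact hg

lemma cox_fix_δ : C.cox C.δv = C.δv :=
  listprod_fix (fun g hg => by obtain ⟨i, rfl⟩ := C.mem_ofFn_s hg; exact C.s_fix_δ i)

lemma cox_K (x y : V n) : C.K (C.cox x) (C.cox y) = C.K x y :=
  C.listprod_K (fun g hg => by obtain ⟨i, rfl⟩ := C.mem_ofFn_s hg; exact C.s_K i) x y

lemma cox_int {v : V n} (hv : IsIntVec v) : IsIntVec (C.cox v) :=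
  listprod_int (fun g hg => by
    obtain ⟨i, rfl⟩ := C.mem_ofFn_s hg; exact fun w hw => C.isIntVec_s i hw) v hv

lemma cox_pow_fix_δ (k : ℕ) : (C.cox ^ k) C.δv = C.δv := by
  induction k with
  | zero => rfl
  | succ m ih => rw [pow_succ, mul_apply', cox_fix_δ, ih]

lemma equiv_inv_fix {u : V n ≃ₗ[ℂ] V n} {v : V n} (h : u v = v) : u⁻¹ v = v := by
  conv_lhs => rw [← h]
  rw [← mul_apply', inv_mul_cancel]
  rfl

lemma cox_zpow_fix_δ (k : ℤ) : (C.cox ^ k) C.δv = C.δv := by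
  cases k with
  | ofNat m => rw [Int.ofNat_eq_coe, zpow_natCast]; exact C.cox_pow_fix_δ m
  | negSucc m =>
    rw [zpow_negSucc]
    exact equiv_inv_fix (C.cox_pow_fix_δ (m + 1))

lemma cox_pow_K (k : ℕ) (x y : V n) :
    C.K ((C.cox ^ k) x) ((C.cox ^ k) y) = C.K x y := by
  induction k with
  | zero => rfl
  | succ m ih => rw [pow_succ', mul_apply', mul_apply', cox_K, ih]

lemma cox_pow_int (k : ℕ) {v : V n} (hv : IsIntVec v) : IsIntVec ((C.cox ^ k) v) := by
  induction k with
  | zero => exact hv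
  | succ m ih => rw [pow_succ', mul_apply']; exact C.cox_int ih


/-- the real quadratic form associated to `K` -/
def qR (C : AffineGCM n) (x : Fin n → ℝ) : ℝ :=
  ∑ i, ∑ j, x i * x j * (C.d i * (C.a i j : ℝ))

lemma qR_apply (x : Fin n → ℝ) :
    C.qR x = ∑ i, ∑ j, x i * x j * (C.d i * (C.a i j : ℝ)) := rfl

lemma K_intVec (z w : Fin n → ℤ) :
    C.K (fun i => (z i : ℂ)) (fun i => (w i : ℂ))
      = ((∑ i, ∑ j, (z i : ℝ) * (w j : ℝ) * (C.d i * (C.a i j : ℝ)) : ℝ) : ℂ) := by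
  rw [K_apply]
  push_cast
  rfl

lemma dz_ker_right (i : Fin n) :
    ∑ j, (C.dz j : ℝ) * (C.d i * (C.a i j : ℝ)) = 0 := by
  have h : ∀ j ∈ Finset.univ, (C.dz j : ℝ) * (C.d i * (C.a i j : ℝ))
      = (C.dz j : ℝ) * (C.d j * (C.a j i : ℝ)) := fun j _ => by rw [C.symmetrizable]
  rw [Finset.sum_congr rfl h]
  exact C.dz_ker i

lemma qR_smul_add_dz (cc ee : ℝ) (x : Fin n → ℝ) :
    C.qR (fun i => cc * x i + ee * (C.dz i : ℝ)) = cc ^ 2 * C.qR x := by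
  have hS2 : ∑ i, ∑ j, x i * ((C.dz j : ℝ) * (C.d i * (C.a i j : ℝ))) = 0 :=
    Finset.sum_eq_zero fun i _ => by rw [← Finset.mul_sum, C.dz_ker_right i, mul_zero]
  have hS3 : ∑ i, ∑ j, (C.dz i : ℝ) * (C.d i * (C.a i j : ℝ)) * x j = 0 := by
    rw [Finset.sum_comm]
    refine Finset.sum_eq_zero fun j _ => ?_
    rw [← Finset.sum_mul]
    have : ∑ i, (C.dz i : ℝ) * (C.d i * (C.a i j : ℝ)) = 0 := C.dz_ker j
    rw [this, zero_mul]
  have hS4 : ∑ i, ∑ j, (C.dz i : ℝ) * ((C.dz j : ℝ) * (C.d i * (C.a i j : ℝ))) = 0 :=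
    Finset.sum_eq_zero fun i _ => by rw [← Finset.mul_sum, C.dz_ker_right i, mul_zero]
  have expand : C.qR (fun i => cc * x i + ee * (C.dz i : ℝ))
      = cc ^ 2 * C.qR x
        + (cc * ee) * (∑ i, ∑ j, x i * ((C.dz j : ℝ) * (C.d i * (C.a i j : ℝ))))
        + (cc * ee) * (∑ i, ∑ j, (C.dz i : ℝ) * (C.d i * (C.a i j : ℝ)) * x j)
        + ee ^ 2 * (∑ i, ∑ j, (C.dz i : ℝ) * ((C.dz j : ℝ) * (C.d i * (C.a i j : ℝ)))) := by
    simp only [qR_apply, Finset.mul_sum, ← Finset.sum_add_distrib]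
    refine Finset.sum_congr rfl fun i _ => Finset.sum_congr rfl fun j _ => by ring
  rw [expand, hS2, hS3, hS4]
  ring

lemma qR_smul (cc : ℝ) (x : Fin n → ℝ) : C.qR (cc • x) = cc ^ 2 * C.qR x := by
  have h := C.qR_smul_add_dz cc 0 x
  simp only [zero_mul, add_zero] at h
  convert h using 2
  rfl

lemma finite_small (i₀ : Fin n) (B : ℝ) :
    {z : Fin n → ℤ | z i₀ = 0 ∧ C.qR (fun i => (z i : ℝ)) ≤ B}.Finite := by
  classical
  have hpd : ∀ y : Fin n → ℝ, y i₀ = 0 → y ≠ 0 → 0 < C.qR y := by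
    intro y h0 hy
    refine C.proper_posDef (Finset.univ.erase i₀) ?_ y ?_ hy
    · intro hEq
      have h2 : i₀ ∈ Finset.univ.erase i₀ := by rw [hEq]; exact Finset.mem_univ i₀
      exact (Finset.notMem_erase _ _) h2
    · intro i hi
      have : i = i₀ := by simpa [Finset.mem_erase] using hi
      rwa [this]
  by_cases hS : ∃ y : Fin n → ℝ, y i₀ = 0 ∧ y ≠ 0
  case neg =>
    refine Set.Finite.subset (Set.finite_singleton 0) ?_
    rintro z ⟨hz0, -⟩
    push_neg at hS
    have hz : (fun i => (z i : ℝ)) = 0 := by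
      by_contra hne
      exact hne (hS _ (by rw [hz0]; norm_num))
    have : ∀ i, z i = 0 := fun i => by
      have h0 : ((z i : ℝ)) = 0 := by simpa using congrFun hz i
      exact_mod_cast h0
    exact Set.mem_singleton_iff.mpr (funext this)
  case pos =>
    obtain ⟨y1, hy10, hy1ne⟩ := hS
    have hy1norm : ‖y1‖ ≠ 0 := norm_ne_zero_iff.mpr hy1ne
    set Ssph : Set (Fin n → ℝ) := {y | y i₀ = 0} ∩ {y | ‖y‖ = 1} with hSsph
    have hne : Ssph.Nonempty := by
      refine ⟨‖y1‖⁻¹ • y1, ?_, ?_⟩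
      · show (‖y1‖⁻¹ • y1) i₀ = 0
        show ‖y1‖⁻¹ • y1 i₀ = 0
        rw [hy10, smul_zero]
      · show ‖‖y1‖⁻¹ • y1‖ = 1
        rw [norm_smul, norm_inv, norm_norm, inv_mul_cancel₀ hy1norm]
    have hclosed : IsClosed Ssph :=
      ((isClosed_eq (continuous_apply i₀) continuous_const)).inter
        (isClosed_eq continuous_norm continuous_const)
    have hbdd : Bornology.IsBounded Ssph := by
      refine (Metric.isBounded_closedBall (x := (0 : Fin n → ℝ)) (r := 1)).subset ?_
      rintro y ⟨-, hy⟩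
      simpa [mem_closedBall_zero_iff] using le_of_eq hy
    have hcompact : IsCompact Ssph := Metric.isCompact_of_isClosed_isBounded hclosed hbdd
    have hcont : Continuous C.qR := by
      show Continuous fun y : Fin n → ℝ => ∑ i, ∑ j, y i * y j * (C.d i * (C.a i j : ℝ))
      apply continuous_finset_sum
      intro i _
      apply continuous_finset_sum
      intro j _
      exact ((continuous_apply i).mul (continuous_apply j)).mul continuous_const
    obtain ⟨y₀, hy₀S, hmin⟩ := hcompact.exists_isMinOn hne hcont.continuousOn
    set m := C.qR y₀ with hm
    have hy₀ne : y₀ ≠ 0 := by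
      intro h
      have : ‖y₀‖ = 1 := hy₀S.2
      rw [h] at this
      simp at this
    have hmpos : 0 < m := hpd y₀ hy₀S.1 hy₀ne
    have hbound : ∀ y : Fin n → ℝ, y i₀ = 0 → C.qR y ≤ B → ‖y‖ ≤ Real.sqrt (B / m) := by
      intro y h0 hqy
      by_cases hy : y = 0
      · rw [hy]
        simp only [norm_zero]
        exact Real.sqrt_nonneg _
      · have hyn : ‖y‖ ≠ 0 := norm_ne_zero_iff.mpr hy
        set u := ‖y‖⁻¹ • y with hu
        have huS : u ∈ Ssph := by
          constructor
          · show (‖y‖⁻¹ • y) i₀ = 0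
            show ‖y‖⁻¹ • y i₀ = 0
            rw [h0, smul_zero]
          · show ‖‖y‖⁻¹ • y‖ = 1
            rw [norm_smul, norm_inv, norm_norm, inv_mul_cancel₀ hyn]
        have hmu : m ≤ C.qR u := hmin huS
        have hyu : y = ‖y‖ • u := by
          rw [hu, smul_smul, mul_inv_cancel₀ hyn, one_smul]
        have hq : C.qR y = ‖y‖ ^ 2 * C.qR u := by
          conv_lhs => rw [hyu]
          exact C.qR_smul _ _
        have h1 : m * ‖y‖ ^ 2 ≤ C.qR y := by
          rw [hq]
          nlinarith [sq_nonneg ‖y‖, hmu]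
        have h2 : ‖y‖ ^ 2 ≤ B / m := by
          rw [le_div_iff₀ hmpos]
          nlinarith
        calc ‖y‖ = Real.sqrt (‖y‖ ^ 2) := by
              rw [Real.sqrt_sq (norm_nonneg y)]
          _ ≤ Real.sqrt (B / m) := Real.sqrt_le_sqrt h2
    set R := Real.sqrt (B / m) with hR
    set M : ℤ := ⌈R⌉ with hM
    refine Set.Finite.subset (Set.Finite.pi (fun _ : Fin n => Set.finite_Icc (-M) M)) ?_
    rintro z ⟨hz0, hzq⟩
    have hzb : ‖(fun i => (z i : ℝ))‖ ≤ R := hbound _ (by simp [hz0]) hzq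
    intro i _
    have h1 : |(z i : ℝ)| ≤ R := by
      calc |(z i : ℝ)| = ‖(fun i => (z i : ℝ)) i‖ := rfl
        _ ≤ ‖(fun i => (z i : ℝ))‖ :=
            norm_le_pi_norm (G := fun _ : Fin n => ℝ) (fun i => (z i : ℝ)) i
        _ ≤ R := hzb
    have hRM : R ≤ (M : ℝ) := Int.le_ceil R
    rw [Set.mem_Icc]
    constructor
    · have : -(M : ℝ) ≤ (z i : ℝ) := by
        have := (abs_le.mp h1).1
        linarith
      exact_mod_cast this
    · have : (z i : ℝ) ≤ (M : ℝ) := le_trans (abs_le.mp h1).2 hRM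
      exact_mod_cast this


lemma n_pos (C' : AffineGCM n) : 0 < n := by
  obtain ⟨g, hg, -⟩ := C'.not_posDef
  rcases Nat.eq_zero_or_pos n with h | h
  · subst h
    exact absurd (funext fun i : Fin 0 => absurd i.2 (by omega)) hg
  · exact h

lemma δv_ne_zero : C.δv ≠ 0 := by
  have hn := C.n_pos
  intro h
  have := congrFun h ⟨0, hn⟩
  have h2 : (C.dz ⟨0, hn⟩ : ℂ) = 0 := this
  have h3 : C.dz ⟨0, hn⟩ = 0 := by exact_mod_cast h2
  exact absurd h3 (ne_of_gt (C.dz_pos _))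

lemma smul_α (c : ℂ) (j : Fin n) : c • α j = Pi.single j c := by
  funext i
  by_cases h : i = j
  · subst h; simp [α, Pi.single_apply]
  · simp [α, Pi.single_apply, h]


lemma exists_pow_translation_aux (i₀ : Fin n) (hdz0 : (C.dz i₀ : ℂ) ≠ 0)
    (zfun : ℕ → Fin n → Fin n → ℤ)
    (hzfun' : ∀ (k : ℕ) (j : Fin n), (C.cox ^ k) (α j) = fun i => ((zfun k j i : ℤ) : ℂ))
    (f : ℕ → (Fin n → Fin n → ℤ))
    (hf : f = fun k j i => C.dz i₀ * zfun k j i - zfun k j i₀ * C.dz i)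
    (k l : ℕ) (hlt : k < l) (hfeq : f k = f l) :
    ∃ N : ℕ, 0 < N ∧ ∀ j : Fin n, ∃ t : ℂ, (C.cox ^ N) (α j) = α j + t • C.δv := by
  refine ⟨l - k, by omega, fun j => ?_⟩
  set A := zfun l j with hA
  set Bz := zfun k j with hB
  have hint : ∀ i, C.dz i₀ * Bz i - Bz i₀ * C.dz i = C.dz i₀ * A i - A i₀ * C.dz i := by
    intro i
    have h := congrFun (congrFun hfeq j) i
    simp only [hf] at h
    exact h
  set t : ℂ := ((A i₀ : ℂ) - (Bz i₀ : ℂ)) / (C.dz i₀ : ℂ) with ht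
  have hstep : (C.cox ^ l) (α j) = (C.cox ^ k) (α j) + t • C.δv := by
    rw [hzfun' l j, hzfun' k j]
    funext i
    show ((A i : ℤ) : ℂ) = ((Bz i : ℤ) : ℂ) + t * ((C.dz i : ℤ) : ℂ)
    have hidZ : (C.dz i₀) * (A i - Bz i) = (A i₀ - Bz i₀) * C.dz i := by
      linear_combination -(hint i)
    have hidC : (C.dz i₀ : ℂ) * ((A i : ℂ) - (Bz i : ℂ))
        = ((A i₀ : ℂ) - (Bz i₀ : ℂ)) * (C.dz i : ℂ) := by exact_mod_cast hidZ
    rw [ht]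
    field_simp
    linear_combination hidC
  have h2 : (C.cox ^ k) ((C.cox ^ (l - k)) (α j)) = (C.cox ^ k) (α j + t • C.δv) := by
    rw [← mul_apply', ← pow_add]
    rw [show k + (l - k) = l by omega]
    rw [hstep, map_add, map_smul, C.cox_pow_fix_δ]
  exact ⟨t, (C.cox ^ k).injective h2⟩

lemma exists_pow_translation :
    ∃ N : ℕ, 0 < N ∧ ∀ j : Fin n, ∃ t : ℂ, (C.cox ^ N) (α j) = α j + t • C.δv := by
  classical
  have hn : 0 < n := C.n_pos
  set i₀ : Fin n := ⟨0, hn⟩ with hi₀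
  have hdz0 : (C.dz i₀ : ℂ) ≠ 0 := by
    exact_mod_cast ne_of_gt (C.dz_pos i₀)
  have hint : ∀ (k : ℕ) (j : Fin n), IsIntVec ((C.cox ^ k) (α j)) :=
    fun k j => C.cox_pow_int k (isIntVec_α j)
  choose zfun hzfun using hint
  have hzfun' : ∀ (k : ℕ) (j : Fin n), (C.cox ^ k) (α j) = fun i => ((zfun k j i : ℤ) : ℂ) :=
    fun k j => funext fun i => hzfun k j i
  -- the quadratic value is constant along the orbit
  have hq : ∀ (k : ℕ) (j : Fin n),
      C.qR (fun i => (zfun k j i : ℝ)) = C.d j * (C.a j j : ℝ) := by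
    intro k j
    have h1 : ((C.qR (fun i => (zfun k j i : ℝ)) : ℝ) : ℂ)
        = C.K ((C.cox ^ k) (α j)) ((C.cox ^ k) (α j)) := by
      rw [hzfun' k j, K_intVec]
      rfl
    rw [C.cox_pow_K, K_α_α] at h1
    have h2 : ((C.qR (fun i => (zfun k j i : ℝ)) : ℝ) : ℂ)
        = ((C.d j * (C.a j j : ℝ) : ℝ) : ℂ) := by
      rw [h1]; push_cast; ring
    exact_mod_cast h2
  -- pigeonhole data
  set f : ℕ → (Fin n → Fin n → ℤ) :=
    fun k j i => C.dz i₀ * zfun k j i - zfun k j i₀ * C.dz i with hf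
  set T : Set (Fin n → Fin n → ℤ) := Set.univ.pi
    (fun j => {w : Fin n → ℤ | w i₀ = 0 ∧
      C.qR (fun i => (w i : ℝ)) ≤ ((C.dz i₀ : ℝ)) ^ 2 * (C.d j * (C.a j j : ℝ))}) with hT
  have hmaps : Set.MapsTo f Set.univ T := by
    intro k _
    rw [hT, Set.mem_pi]
    intro j _
    constructor
    · simp only [hf]
      ring
    · have hcast : (fun i => ((f k j i : ℤ) : ℝ))
          = fun i => (C.dz i₀ : ℝ) * (zfun k j i : ℝ) + (-(zfun k j i₀ : ℝ)) * (C.dz i : ℝ) := by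
        funext i
        simp only [hf]
        push_cast
        ring
      show C.qR (fun i => ((f k j i : ℤ) : ℝ)) ≤ _
      rw [hcast, C.qR_smul_add_dz, hq k j]
  have hTfin : T.Finite := Set.Finite.pi fun j => C.finite_small i₀ _
  obtain ⟨k, -, l, -, hkl, hfeq⟩ :=
    Set.infinite_univ.exists_ne_map_eq_of_mapsTo hmaps hTfin
  -- wlog k < l
  rcases lt_or_gt_of_ne hkl with hlt | hlt
  case _ => exact C.exists_pow_translation_aux i₀ hdz0 zfun hzfun' f hf k l hlt hfeq
  case _ => exact C.exists_pow_translation_aux i₀ hdz0 zfun hzfun' f hf l k hlt hfeq.symm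


lemma exists_pow_key :
    ∃ N : ℕ, 0 < N ∧ ∀ v : V n, ∃ t : ℂ, (C.cox ^ N) v = v + t • C.δv := by
  obtain ⟨N, hN, h⟩ := C.exists_pow_translation
  refine ⟨N, hN, fun v => ?_⟩
  have hLα : ∀ j, ((C.cox ^ N) (α j) - α j) ∈ Submodule.span ℂ {C.δv} := by
    intro j
    obtain ⟨t, ht⟩ := h j
    rw [ht, add_sub_cancel_left]
    exact Submodule.smul_mem _ t (Submodule.mem_span_singleton_self _)
  set L : V n →ₗ[ℂ] V n :=
    ((C.cox ^ N : V n ≃ₗ[ℂ] V n) : V n →ₗ[ℂ] V n) - LinearMap.id with hLdef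
  have hLapp : ∀ w : V n, L w = (C.cox ^ N) w - w := fun w => rfl
  have hv : v = ∑ j, v j • α j := by
    rw [Finset.sum_congr rfl (fun j (_ : j ∈ Finset.univ) => smul_α (v j) j)]
    exact (Finset.univ_sum_single v).symm
  have hLv : L v ∈ Submodule.span ℂ {C.δv} := by
    conv_rhs => rw [hv]
    rw [map_sum]
    refine Submodule.sum_mem _ fun j _ => ?_
    rw [map_smul]
    refine Submodule.smul_mem _ _ ?_
    show L (α j) ∈ _
    rw [hLapp]
    exact hLα j
  obtain ⟨t, ht⟩ := Submodule.mem_span_singleton.mp hLv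
  rw [hLapp] at ht
  exact ⟨t, sub_eq_iff_eq_add'.mp ht.symm⟩

lemma pow_fix_of_fix {u : V n ≃ₗ[ℂ] V n} {w : V n} (h : u w = w) (m : ℕ) :
    (u ^ m) w = w := by
  induction m with
  | zero => rfl
  | succ p ih => rw [pow_succ, mul_apply', h, ih]

lemma zpow_fix_of_fix {u : V n ≃ₗ[ℂ] V n} {w : V n} (h : u w = w) (m : ℤ) :
    (u ^ m) w = w := by
  cases m with
  | ofNat p => rw [Int.ofNat_eq_coe, zpow_natCast]; exact pow_fix_of_fix h p
  | negSucc p => rw [zpow_negSucc]; exact equiv_inv_fix (pow_fix_of_fix h (p + 1))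

lemma translate_iter {u : V n ≃ₗ[ℂ] V n} {w βv : V n} {t : ℂ} (huw : u w = w)
    (hβ : u βv = βv + t • w) : ∀ m : ℤ, (u ^ m) βv = βv + (m : ℂ) • t • w := by
  have hNat : ∀ m : ℕ, (u ^ m) βv = βv + (m : ℂ) • t • w := by
    intro m
    induction m with
    | zero => simp
    | succ p ih =>
      rw [pow_succ', mul_apply', ih, map_add, hβ, map_smul, map_smul, huw]
      push_cast
      module
  intro m
  cases m with
  | ofNat p =>
    rw [Int.ofNat_eq_coe, zpow_natCast, hNat p]
    norm_num
  | negSucc p =>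
    rw [zpow_negSucc]
    have h1 : (u ^ (p + 1)) (βv - ((p + 1 : ℕ) : ℂ) • t • w) = βv := by
      rw [map_sub, hNat (p + 1), map_smul, map_smul, pow_fix_of_fix huw]
      module
    have h2 : (u ^ (p + 1))⁻¹ βv = βv - ((p + 1 : ℕ) : ℂ) • t • w := by
      apply (u ^ (p + 1)).injective
      rw [h1, ← mul_apply', mul_inv_cancel]
      rfl
    rw [h2]
    push_cast
    module

lemma eig_pow {u : V n ≃ₗ[ℂ] V n} {v : V n} {μ : ℂ} (h : u v = μ • v) (m : ℕ) :
    (u ^ m) v = (μ ^ m) • v := by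
  induction m with
  | zero => simp
  | succ p ih =>
    rw [pow_succ', mul_apply', ih, map_smul, h, smul_smul, ← pow_succ]

end Aux
/-- Theorem 1.2(2): the `c`-orbit of a root `β` is finite iff `β ∈ U c`. -/
theorem finite_orbit_iff_mem_eigSpan {n : ℕ} (C : AffineGCM n) :
    ∀ β ∈ C.Φ, (orbit C.cox β).Finite ↔ β ∈ eigSpan C.cox := by
  obtain ⟨N, hN, hkey⟩ := C.exists_pow_key
  intro β _
  obtain ⟨t, ht⟩ := hkey β
  have hNδ : (C.cox ^ N) C.δv = C.δv := C.cox_pow_fix_δ N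
  constructor
  · -- finite orbit ⇒ β ∈ eigSpan
    intro hfin
    -- first, t = 0
    have ht0 : t = 0 := by
      by_contra htne
      have htδ : t • C.δv ≠ 0 := smul_ne_zero htne C.δv_ne_zero
      have hinj : Function.Injective (fun m : ℤ => β + (m : ℂ) • t • C.δv) := by
        intro m₁ m₂ hmm
        simp only [add_right_inj] at hmm
        have h4 : ((m₁ : ℂ) - (m₂ : ℂ)) • (t • C.δv) = 0 := by
          rw [sub_smul, hmm, sub_self]
        rcases smul_eq_zero.mp h4 with h3 | h3
        · exact_mod_cast sub_eq_zero.mp h3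
        · exact absurd h3 htδ
      have hsub : Set.range (fun m : ℤ => β + (m : ℂ) • t • C.δv) ⊆ orbit C.cox β := by
        rintro x ⟨m, rfl⟩
        refine ⟨(N : ℤ) * m, ?_⟩
        show (C.cox ^ ((N : ℤ) * m)) β = β + (m : ℂ) • t • C.δv
        rw [zpow_mul, zpow_natCast]
        exact translate_iter hNδ ht m
      exact ((Set.infinite_range_of_injective hinj).mono hsub) hfin
    have hβfix : (C.cox ^ N) β = β := by rw [ht, ht0]; simp
    -- Fourier decomposition of β into eigenvectors
    have hNne : (N : ℕ) ≠ 0 := by omega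
    set ζ : ℂ := Complex.exp (2 * Real.pi * Complex.I / N) with hζ
    have hprim : IsPrimitiveRoot ζ N := Complex.isPrimitiveRoot_exp N hNne
    have hζN : ζ ^ N = 1 := hprim.pow_eq_one
    set w : ℂ → V n := fun μ => ∑ j ∈ Finset.range N, (μ⁻¹) ^ j • (C.cox ^ j) β with hw
    have hweig : ∀ μ : ℂ, μ ^ N = 1 → C.cox (w μ) = μ • w μ := by
      intro μ hμ
      have hμne : μ ≠ 0 := by
        intro h0
        rw [h0, zero_pow hNne] at hμ
        exact zero_ne_one hμ
      rw [hw]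
      simp only
      rw [map_sum]
      have hterm : ∀ j ∈ Finset.range N,
          C.cox ((μ⁻¹) ^ j • (C.cox ^ j) β) = μ • ((μ⁻¹) ^ (j + 1) • (C.cox ^ (j + 1)) β) := by
        intro j _
        rw [map_smul]
        have hshift : C.cox ((C.cox ^ j) β) = (C.cox ^ (j + 1)) β := by
          rw [pow_succ', mul_apply']
        rw [hshift, smul_smul]
        congr 1
        rw [pow_succ]
        field_simp
      rw [Finset.sum_congr rfl hterm, ← Finset.smul_sum]
      congr 1
      -- shift the sum using periodicity
      have hGN : (μ⁻¹) ^ N • (C.cox ^ N) β = (μ⁻¹) ^ 0 • (C.cox ^ 0) β := by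
        rw [hβfix, inv_pow, hμ]
        simp
      have e1 := Finset.sum_range_succ' (fun j => (μ⁻¹) ^ j • (C.cox ^ j) β) N
      have e2 := Finset.sum_range_succ (fun j => (μ⁻¹) ^ j • (C.cox ^ j) β) N
      have e3 := e1.symm.trans e2
      rw [hGN] at e3
      exact add_right_cancel e3
    have hsum : ∑ k ∈ Finset.range N, w (ζ ^ k) = (N : ℂ) • β := by
      rw [hw]
      simp only
      have hswap : ∀ k j : ℕ, ((ζ ^ k)⁻¹) ^ j = ((ζ⁻¹) ^ j) ^ k := by
        intro k j
        simp only [inv_pow, ← pow_mul]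
        rw [Nat.mul_comm]
      calc ∑ k ∈ Finset.range N, ∑ j ∈ Finset.range N, ((ζ ^ k)⁻¹) ^ j • (C.cox ^ j) β
          = ∑ j ∈ Finset.range N, (∑ k ∈ Finset.range N, ((ζ⁻¹) ^ j) ^ k) • (C.cox ^ j) β := by
            rw [Finset.sum_comm]
            refine Finset.sum_congr rfl fun j _ => ?_
            rw [Finset.sum_smul]
            exact Finset.sum_congr rfl fun k _ => by rw [hswap]
        _ = (N : ℂ) • β := by
            rw [Finset.sum_eq_single 0]
            · simp
            · intro j hj hjne
              have hj' : j < N := Finset.mem_range.mp hj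
              have hx : (ζ⁻¹) ^ j ≠ 1 := by
                intro hone
                rw [inv_pow, inv_eq_one] at hone
                exact hprim.pow_ne_one_of_pos_of_lt hjne hj' hone
              have hxN : ((ζ⁻¹) ^ j) ^ N = 1 := by
                rw [← pow_mul, Nat.mul_comm, pow_mul, inv_pow, hζN, inv_one, one_pow]
              rw [geom_sum_eq hx, hxN, sub_self, zero_div, zero_smul]
            · intro h0
              exact absurd (Finset.mem_range.mpr (by omega)) h0
    have hmemsum : ∀ k ∈ Finset.range N, w (ζ ^ k) ∈ eigSpan C.cox := by
      intro k _
      have hμN : (ζ ^ k) ^ N = 1 := by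
        rw [← pow_mul, Nat.mul_comm, pow_mul, hζN, one_pow]
      have h2 : w (ζ ^ k) ∈ Module.End.eigenspace (C.cox : Module.End ℂ (V n)) (ζ ^ k) := by
        rw [Module.End.mem_eigenspace_iff]
        exact hweig _ hμN
      exact le_iSup (fun μ => Module.End.eigenspace (C.cox : Module.End ℂ (V n)) μ) (ζ ^ k) h2
    have hNβ : (N : ℂ) • β ∈ eigSpan C.cox := hsum ▸ Submodule.sum_mem _ hmemsum
    have hNcne : (N : ℂ) ≠ 0 := by exact_mod_cast hNne
    have hfinal := Submodule.smul_mem (eigSpan C.cox) ((N : ℂ)⁻¹) hNβ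
    rwa [smul_smul, inv_mul_cancel₀ hNcne, one_smul] at hfinal
  · -- β ∈ eigSpan ⇒ finite orbit
    intro hmem
    have hle : eigSpan C.cox ≤ LinearMap.ker
        (((C.cox ^ N : V n ≃ₗ[ℂ] V n) : V n →ₗ[ℂ] V n) - LinearMap.id) := by
      refine iSup_le fun μ => ?_
      intro v hv
      rw [Module.End.mem_eigenspace_iff] at hv
      have hv' : C.cox v = μ • v := hv
      have hpow : (C.cox ^ N) v = (μ ^ N) • v := eig_pow hv' N
      obtain ⟨s, hs⟩ := hkey v
      rw [LinearMap.mem_ker]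
      show (C.cox ^ N) v - v = 0
      by_cases hμ : μ ^ N = 1
      · rw [hpow, hμ, one_smul, sub_self]
      · have hμN : (μ ^ N - 1) ≠ 0 := sub_ne_zero.mpr hμ
        have hveq : (μ ^ N - 1) • v = s • C.δv := by
          rw [sub_smul, ← hpow, one_smul, hs, add_sub_cancel_left]
        have hvδ : v = ((μ ^ N - 1)⁻¹ * s) • C.δv := by
          rw [mul_smul, ← hveq, smul_smul, inv_mul_cancel₀ hμN, one_smul]
        have hcv : C.cox v = v := by
          conv_lhs => rw [hvδ]
          rw [map_smul, C.cox_fix_δ, ← hvδ]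
        rw [hv'] at hcv
        by_cases hv0 : v = 0
        · rw [hv0]; simp
        · have hμ1 : μ = 1 := by
            have h2 : (μ - 1) • v = 0 := by rw [sub_smul, hcv, one_smul, sub_self]
            rcases smul_eq_zero.mp h2 with h3 | h3
            · exact sub_eq_zero.mp h3
            · exact absurd h3 hv0
          rw [hμ1, one_pow] at hμ
          exact absurd rfl hμ
    have hker := hle hmem
    rw [LinearMap.mem_ker] at hker
    have hfix : (C.cox ^ N) β = β := by
      have h0 : (C.cox ^ N) β - β = 0 := hker
      exact sub_eq_zero.mp h0
    have hz : ∀ m : ℤ, (C.cox ^ ((N : ℤ) * m)) β = β := fun m => by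
      rw [zpow_mul, zpow_natCast]
      exact zpow_fix_of_fix hfix m
    refine Set.Finite.subset ((Set.finite_Icc (0 : ℤ) (N : ℤ)).image
      (fun r => (C.cox ^ r) β)) ?_
    rintro x ⟨k, rfl⟩
    have hN0 : (0 : ℤ) < (N : ℤ) := by exact_mod_cast hN
    refine ⟨k % (N : ℤ), ?_, ?_⟩
    · rw [Set.mem_Icc]
      exact ⟨Int.emod_nonneg k (by omega), le_of_lt (Int.emod_lt_of_pos k hN0)⟩
    · show (C.cox ^ (k % (N : ℤ))) β = (C.cox ^ k) β
      calc (C.cox ^ (k % (N : ℤ))) β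
          = (C.cox ^ (k % (N : ℤ))) ((C.cox ^ ((N : ℤ) * (k / (N : ℤ)))) β) := by rw [hz]
        _ = (C.cox ^ (k % (N : ℤ) + (N : ℤ) * (k / (N : ℤ)))) β := by
            rw [zpow_add, mul_apply']
        _ = (C.cox ^ k) β := by rw [Int.emod_add_mul_ediv]

end AffineGCM
end
end

section
/- Let c be a Coxeter element in the Weyl group of an affine root system of rank n. Then c, acting on V, has eigenvalue 1 with algebraic multiplicity 2 and geometric multiplicity 1, and the imaginary root δ is a 1-eigenvector of c. -/
open scoped BigOperators

noncomputable section

namespace AffineGCM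

variable {n : ℕ}

variable (C : AffineGCM n)

/-! ### Auxiliary development for `eigenvalue_one` -/

section Aux

open Matrix Module

lemma aux_npos {n : ℕ} (D : AffineGCM n) : 0 < n := by
  by_contra h
  push_neg at h
  have hn : n = 0 := Nat.le_zero.mp h
  subst hn
  rcases D.not_posDef with ⟨g, hg, -⟩
  exact hg (funext fun i => i.elim0)

/-- the real symmetrized Cartan matrix `B = D A` -/
def Brm : Matrix (Fin n) (Fin n) ℝ := Matrix.of fun i j => C.d i * (C.a i j : ℝ)

/-- the real unit upper triangular part of `A` -/
def Urm : Matrix (Fin n) (Fin n) ℝ :=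
  Matrix.of fun i j => if i = j then 1 else if i < j then (C.a i j : ℝ) else 0

/-- `M = D U` -/
def Mrm : Matrix (Fin n) (Fin n) ℝ := Matrix.of fun i j => C.d i * C.Urm i j

/-- the real coordinate vector of `δ` -/
def dzr : Fin n → ℝ := fun i => (C.dz i : ℝ)

lemma aux_dzr_pos (i : Fin n) : 0 < C.dzr i := by
  have := C.dz_pos i
  simp only [dzr]
  exact_mod_cast this

lemma aux_Bsym (i j : Fin n) : C.Brm i j = C.Brm j i := by
  simpa [Brm] using C.symmetrizable i j

lemma aux_a_dz (i : Fin n) : ∑ j, (C.a i j : ℝ) * C.dzr j = 0 := by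
  have h := C.dz_ker i
  have h2 : ∑ k, (C.dz k : ℝ) * (C.d k * (C.a k i : ℝ))
      = C.d i * ∑ j, (C.a i j : ℝ) * C.dzr j := by
    rw [Finset.mul_sum]
    refine Finset.sum_congr rfl fun k _ => ?_
    rw [← C.symmetrizable]
    simp only [dzr]
    ring
  rw [h] at h2
  have hd := C.d_pos i
  rcases mul_eq_zero.mp h2.symm with h3 | h3
  · exact absurd h3 (ne_of_gt hd)
  · exact h3

lemma aux_Bdz : C.Brm *ᵥ C.dzr = 0 := by
  funext i
  have := C.aux_a_dz i
  simp only [Matrix.mulVec, dotProduct, Brm, Matrix.of_apply, Pi.zero_apply]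
  calc ∑ j, C.d i * (C.a i j : ℝ) * C.dzr j = C.d i * ∑ j, (C.a i j : ℝ) * C.dzr j := by
        rw [Finset.mul_sum]; exact Finset.sum_congr rfl fun j _ => by ring
  _ = 0 := by rw [this, mul_zero]

lemma aux_dzB (x : Fin n → ℝ) : C.dzr ⬝ᵥ (C.Brm *ᵥ x) = 0 := by
  rw [Matrix.dotProduct_mulVec]
  have : C.dzr ᵥ* C.Brm = 0 := by
    funext j
    have := congrFun C.aux_Bdz j
    simp only [Matrix.vecMul, Matrix.mulVec, dotProduct, Pi.zero_apply] at this ⊢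
    rw [← this]
    exact Finset.sum_congr rfl fun i _ => by rw [C.aux_Bsym i j]; ring
  rw [this, zero_dotProduct]

lemma aux_quadform (x : Fin n → ℝ) :
    x ⬝ᵥ (C.Brm *ᵥ x) = ∑ i, ∑ j, x i * x j * (C.d i * (C.a i j : ℝ)) := by
  simp only [dotProduct, Matrix.mulVec, Brm, Matrix.of_apply]
  refine Finset.sum_congr rfl fun i _ => ?_
  rw [Finset.mul_sum]
  exact Finset.sum_congr rfl fun j _ => by ring

lemma aux_PSD : C.Brm.PosSemidef := by
  rw [Matrix.posSemidef_iff_dotProduct_mulVec]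
  constructor
  · ext i j
    simp only [Matrix.conjTranspose_apply, star_trivial]
    exact C.aux_Bsym j i
  · intro x
    rw [star_trivial, C.aux_quadform x]
    exact C.posSemidef x

lemma aux_ker {g : Fin n → ℝ} (hg : C.Brm *ᵥ g = 0) : ∃ t : ℝ, g = t • C.dzr := by
  have hn := C.aux_npos
  set i0 : Fin n := ⟨0, hn⟩ with hi0
  set t : ℝ := g i0 / C.dzr i0 with ht
  refine ⟨t, ?_⟩
  set h : Fin n → ℝ := g - t • C.dzr with hh
  have hBh : C.Brm *ᵥ h = 0 := by
    rw [hh, Matrix.mulVec_sub, hg, Matrix.mulVec_smul, C.aux_Bdz, smul_zero, sub_zero]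
  have hhi0 : h i0 = 0 := by
    have hne : C.dzr i0 ≠ 0 := ne_of_gt (C.aux_dzr_pos i0)
    simp only [hh, Pi.sub_apply, Pi.smul_apply, smul_eq_mul, ht]
    rw [div_mul_cancel₀ _ hne, sub_self]
  by_cases hzero : h = 0
  · rw [hh] at hzero
    exact sub_eq_zero.mp hzero
  · exfalso
    have hJ : (Finset.univ.erase i0 : Finset (Fin n)) ≠ Finset.univ := by
      intro hEq
      exact Finset.notMem_erase i0 Finset.univ (by rw [hEq]; exact Finset.mem_univ i0)
    have hvan : ∀ i, i ∉ Finset.univ.erase i0 → h i = 0 := by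
      intro i hi
      have : i = i0 := by
        by_contra hne
        exact hi (Finset.mem_erase.mpr ⟨hne, Finset.mem_univ i⟩)
      rw [this]; exact hhi0
    have hpos := C.proper_posDef _ hJ h hvan hzero
    rw [← C.aux_quadform h] at hpos
    rw [hBh, dotProduct_zero] at hpos
    exact lt_irrefl 0 hpos

lemma aux_MMT : C.Mrm + C.Mrmᵀ = C.Brm := by
  ext i j
  simp only [Matrix.add_apply, Matrix.transpose_apply, Mrm, Urm, Brm, Matrix.of_apply]
  rcases lt_trichotomy i j with h | h | h
  · rw [if_neg (ne_of_lt h), if_pos h, if_neg (ne_of_gt h), if_neg (not_lt.mpr (le_of_lt h))]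
    ring
  · subst h
    simp only [if_pos rfl]
    rw [C.diag i]
    push_cast
    ring
  · rw [if_neg (ne_of_gt h), if_neg (not_lt.mpr (le_of_lt h)), if_neg (ne_of_lt h), if_pos h]
    rw [mul_zero, zero_add, ← C.symmetrizable]

lemma aux_dotMT {n : ℕ} (x y : Fin n → ℝ) (M : Matrix (Fin n) (Fin n) ℝ) :
    x ⬝ᵥ (Mᵀ *ᵥ y) = y ⬝ᵥ (M *ᵥ x) := by
  rw [Matrix.mulVec_transpose, dotProduct_comm, ← Matrix.dotProduct_mulVec]

lemma aux_dzMdz : C.dzr ⬝ᵥ (C.Mrm *ᵥ C.dzr) = 0 := by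
  have h1 : C.dzr ⬝ᵥ (C.Mrmᵀ *ᵥ C.dzr) = C.dzr ⬝ᵥ (C.Mrm *ᵥ C.dzr) :=
    aux_dotMT C.dzr C.dzr C.Mrm
  have h2 : C.dzr ⬝ᵥ ((C.Mrm + C.Mrmᵀ) *ᵥ C.dzr) = 0 := by
    rw [C.aux_MMT]
    exact C.aux_dzB C.dzr
  rw [Matrix.add_mulVec, dotProduct_add, h1] at h2
  linarith

lemma aux_Mdz_ne : C.Mrm *ᵥ C.dzr ≠ 0 := by
  have hn := C.aux_npos
  intro hEq
  set i1 : Fin n := ⟨n - 1, by omega⟩ with hi1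
  have h := congrFun hEq i1
  simp only [Matrix.mulVec, dotProduct, Mrm, Urm, Matrix.of_apply, Pi.zero_apply] at h
  rw [Finset.sum_eq_single i1] at h
  · rw [if_pos rfl, mul_one] at h
    have h1 := C.d_pos i1
    have h2 := C.aux_dzr_pos i1
    nlinarith
  · intro j _ hj
    have hnotlt : ¬ i1 < j := by
      intro hlt
      have : (j : ℕ) < n := j.isLt
      have : (i1 : ℕ) < (j : ℕ) := hlt
      simp only [hi1] at this
      omega
    rw [if_neg (fun hc => hj hc.symm), if_neg hnotlt]
    ring
  · intro hmem
    exact absurd (Finset.mem_univ i1) hmem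

/-- the linear functional `y ↦ δᵀ y` -/
def dzfun : (Fin n → ℝ) →ₗ[ℝ] ℝ where
  toFun y := C.dzr ⬝ᵥ y
  map_add' x y := dotProduct_add _ x y
  map_smul' r x := by simp [dotProduct_smul]

lemma aux_exists_v2 : ∃ v2 : Fin n → ℝ, C.Brm *ᵥ v2 = C.Mrm *ᵥ C.dzr := by
  have hn := C.aux_npos
  set BL : (Fin n → ℝ) →ₗ[ℝ] (Fin n → ℝ) := C.Brm.mulVecLin with hBL
  have hrange_le : LinearMap.range BL ≤ LinearMap.ker C.dzfun := by
    rintro y ⟨x, rfl⟩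
    simp only [LinearMap.mem_ker, dzfun, LinearMap.coe_mk, AddHom.coe_mk, hBL,
      Matrix.mulVecLin_apply]
    exact C.aux_dzB x
  have hkerBL : LinearMap.ker BL = Submodule.span ℝ {C.dzr} := by
    apply le_antisymm
    · intro x hx
      simp only [LinearMap.mem_ker, hBL, Matrix.mulVecLin_apply] at hx
      obtain ⟨t, ht⟩ := C.aux_ker hx
      exact Submodule.mem_span_singleton.mpr ⟨t, ht.symm⟩
    · rw [Submodule.span_singleton_le_iff_mem]
      simp only [LinearMap.mem_ker, hBL, Matrix.mulVecLin_apply]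
      exact C.aux_Bdz
  have hdz_ne : C.dzr ≠ 0 := by
    intro hEq
    have := congrFun hEq ⟨0, hn⟩
    have h2 := C.aux_dzr_pos ⟨0, hn⟩
    simp only [Pi.zero_apply] at this
    linarith
  have hfr_ker : finrank ℝ (LinearMap.ker BL) = 1 := by
    rw [hkerBL]; exact finrank_span_singleton hdz_ne
  have hsurj : Function.Surjective C.dzfun := by
    intro r
    have hpos : 0 < C.dzr ⬝ᵥ C.dzr := by
      apply Finset.sum_pos
      · intro i _
        exact mul_pos (C.aux_dzr_pos i) (C.aux_dzr_pos i)
      · exact ⟨⟨0, hn⟩, Finset.mem_univ _⟩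
    refine ⟨(r / (C.dzr ⬝ᵥ C.dzr)) • C.dzr, ?_⟩
    simp only [dzfun, LinearMap.coe_mk, AddHom.coe_mk, dotProduct_smul, smul_eq_mul]
    field_simp
  have h1 := LinearMap.finrank_range_add_finrank_ker BL
  have h2 := LinearMap.finrank_range_add_finrank_ker C.dzfun
  rw [LinearMap.range_eq_top.mpr hsurj] at h2
  have hVfr : finrank ℝ (Fin n → ℝ) = n := by simp
  rw [hVfr, hfr_ker] at h1
  rw [hVfr] at h2
  have htop : finrank ℝ (⊤ : Submodule ℝ ℝ) = 1 := by simp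
  rw [htop] at h2
  have heq : LinearMap.range BL = LinearMap.ker C.dzfun := by
    apply Submodule.eq_of_le_of_finrank_le hrange_le
    omega
  have hmem : C.Mrm *ᵥ C.dzr ∈ LinearMap.ker C.dzfun := by
    simp only [LinearMap.mem_ker, dzfun, LinearMap.coe_mk, AddHom.coe_mk]
    exact C.aux_dzMdz
  rw [← heq] at hmem
  obtain ⟨v2, hv2⟩ := hmem
  exact ⟨v2, hv2⟩

lemma aux_keyreal {v2 : Fin n → ℝ} (hv2 : C.Brm *ᵥ v2 = C.Mrm *ᵥ C.dzr) :
    C.dzr ⬝ᵥ (C.Mrm *ᵥ v2) ≠ 0 := by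
  have h1 : C.dzr ⬝ᵥ (C.Mrmᵀ *ᵥ v2) = v2 ⬝ᵥ (C.Brm *ᵥ v2) := by
    rw [aux_dotMT, hv2]
  have h2 : C.dzr ⬝ᵥ (C.Mrm *ᵥ v2) + C.dzr ⬝ᵥ (C.Mrmᵀ *ᵥ v2) = 0 := by
    rw [← dotProduct_add, ← Matrix.add_mulVec, C.aux_MMT]
    exact C.aux_dzB v2
  intro hEq
  rw [hEq, zero_add, h1] at h2
  have h3 : C.Brm *ᵥ v2 = 0 := by
    rw [← C.aux_PSD.dotProduct_mulVec_zero_iff v2, star_trivial]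
    exact h2
  rw [hv2] at h3
  exact C.aux_Mdz_ne h3

end Aux


section Aux2

open Matrix Module

/-- the complex Cartan matrix -/
def Acm : Matrix (Fin n) (Fin n) ℂ := Matrix.of fun i j => (C.a i j : ℂ)

/-- the complex unit upper triangular part of `A` -/
def Ucm : Matrix (Fin n) (Fin n) ℂ :=
  Matrix.of fun i j => if i = j then 1 else if i < j then (C.a i j : ℂ) else 0

/-- the complex unit lower triangular part of `A` -/
def Lcm : Matrix (Fin n) (Fin n) ℂ :=
  Matrix.of fun i j => if i = j then 1 else if j < i then (C.a i j : ℂ) else 0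

/-- the matrix of the simple reflection `s i` -/
def Smx (i : Fin n) : Matrix (Fin n) (Fin n) ℂ :=
  Matrix.of fun p q => (if p = q then 1 else 0) - (if p = i then (C.a i q : ℂ) else 0)

lemma aux_LUA : C.Lcm + C.Ucm = C.Acm := by
  ext i j
  simp only [Matrix.add_apply, Lcm, Ucm, Acm, Matrix.of_apply]
  rcases lt_trichotomy i j with h | h | h
  · rw [if_neg (ne_of_lt h), if_neg (not_lt.mpr (le_of_lt h)), if_neg (ne_of_lt h), if_pos h,
      zero_add]
  · subst h
    simp only [if_pos rfl]
    rw [C.diag i]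
    push_cast
    ring
  · rw [if_neg (ne_of_gt h), if_pos h, if_neg (ne_of_gt h), if_neg (not_lt.mpr (le_of_lt h)),
      add_zero]

lemma aux_ULA (p q : Fin n) : C.Ucm p q - C.Acm p q = -(C.Lcm p q) := by
  have := congrFun (congrFun C.aux_LUA p) q
  simp only [Matrix.add_apply] at this
  linear_combination this

lemma aux_Ucast (y : Fin n → ℝ) (i : Fin n) :
    (C.Ucm *ᵥ fun j => ((y j : ℝ) : ℂ)) i = ((C.Urm *ᵥ y) i : ℂ) := by
  simp only [Matrix.mulVec, dotProduct, Ucm, Urm, Matrix.of_apply]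
  push_cast
  refine Finset.sum_congr rfl fun j _ => ?_
  split_ifs <;> push_cast <;> ring

lemma aux_kerc {x : V n} (hx : C.Acm *ᵥ x = 0) : ∃ t : ℂ, x = t • C.δv := by
  have hre : C.Brm *ᵥ (fun i => (x i).re) = 0 := by
    funext i
    have hxi := congrFun hx i
    simp only [Matrix.mulVec, dotProduct, Acm, Matrix.of_apply, Pi.zero_apply] at hxi ⊢
    have h2 : (∑ j, (C.a i j : ℂ) * x j).re = 0 := by rw [hxi]; rfl
    rw [Complex.re_sum] at h2
    have h3 : ∀ j, ((C.a i j : ℂ) * x j).re = (C.a i j : ℝ) * (x j).re := by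
      intro j
      simp [Complex.mul_re]
    rw [Finset.sum_congr rfl fun j _ => h3 j] at h2
    simp only [Brm, Matrix.of_apply]
    calc ∑ j, C.d i * (C.a i j : ℝ) * (x j).re
        = C.d i * ∑ j, (C.a i j : ℝ) * (x j).re := by
          rw [Finset.mul_sum]; exact Finset.sum_congr rfl fun j _ => by ring
    _ = 0 := by rw [h2, mul_zero]
  have him : C.Brm *ᵥ (fun i => (x i).im) = 0 := by
    funext i
    have hxi := congrFun hx i
    simp only [Matrix.mulVec, dotProduct, Acm, Matrix.of_apply, Pi.zero_apply] at hxi ⊢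
    have h2 : (∑ j, (C.a i j : ℂ) * x j).im = 0 := by rw [hxi]; rfl
    rw [Complex.im_sum] at h2
    have h3 : ∀ j, ((C.a i j : ℂ) * x j).im = (C.a i j : ℝ) * (x j).im := by
      intro j
      simp [Complex.mul_im]
    rw [Finset.sum_congr rfl fun j _ => h3 j] at h2
    simp only [Brm, Matrix.of_apply]
    calc ∑ j, C.d i * (C.a i j : ℝ) * (x j).im
        = C.d i * ∑ j, (C.a i j : ℝ) * (x j).im := by
          rw [Finset.mul_sum]; exact Finset.sum_congr rfl fun j _ => by ring
    _ = 0 := by rw [h2, mul_zero]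
  obtain ⟨t1, ht1⟩ := C.aux_ker hre
  obtain ⟨t2, ht2⟩ := C.aux_ker him
  refine ⟨(t1 : ℂ) + (t2 : ℂ) * Complex.I, ?_⟩
  funext i
  have h1 := congrFun ht1 i
  have h2 := congrFun ht2 i
  simp only [Pi.smul_apply, smul_eq_mul, dzr] at h1 h2
  apply Complex.ext
  · simp [δv, Complex.mul_re, Complex.add_re, Complex.add_im, h1]
  · simp [δv, Complex.mul_im, Complex.add_re, Complex.add_im, h2]

/-- partial products of the reflection matrices -/
def prodDrop (k : ℕ) : Matrix (Fin n) (Fin n) ℂ := ((List.ofFn C.Smx).drop k).prod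

lemma prodDrop_top : C.prodDrop n = 1 := by
  unfold prodDrop
  rw [List.drop_eq_nil_of_le (by simp), List.prod_nil]

lemma prodDrop_succ (k : ℕ) (hk : k < n) :
    C.prodDrop k = C.Smx ⟨k, hk⟩ * C.prodDrop (k + 1) := by
  unfold prodDrop
  rw [List.drop_eq_getElem_cons (by simpa using hk), List.prod_cons]
  congr 2
  exact List.getElem_ofFn _

lemma aux_Smx_mul (i : Fin n) (Q : Matrix (Fin n) (Fin n) ℂ) (p j : Fin n) :
    (C.Smx i * Q) p j = Q p j - (if p = i then ∑ q, (C.a i q : ℂ) * Q q j else 0) := by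
  rw [Matrix.mul_apply]
  simp only [Smx, Matrix.of_apply, sub_mul, ite_mul, one_mul, zero_mul]
  rw [Finset.sum_sub_distrib]
  congr 1
  · simp [Finset.sum_ite_eq]
  · by_cases hp : p = i
    · simp [hp]
    · simp [hp]

lemma aux_ind (m : ℕ) :
    (∀ p j : Fin n, (p : ℕ) < n - m → C.prodDrop (n - m) p j = if p = j then 1 else 0)
    ∧ (∀ p j : Fin n, n - m ≤ (p : ℕ) →
        (C.Ucm * C.prodDrop (n - m)) p j = -(C.Lcm p j)) := by
  induction m with
  | zero =>
    constructor
    · intro p j _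
      rw [Nat.sub_zero, C.prodDrop_top, Matrix.one_apply]
    · intro p j hp
      rw [Nat.sub_zero] at hp
      exact absurd p.isLt (not_lt.mpr hp)
  | succ m ih =>
    by_cases hm : m < n
    swap
    · have h0 : n - m = 0 := by omega
      have h1 : n - (m + 1) = 0 := by omega
      rw [h1, ← h0]
      exact ih
    · set k := n - (m + 1) with hkdef
      have hkn : k < n := by omega
      have hk1 : k + 1 = n - m := by omega
      set K : Fin n := ⟨k, hkn⟩ with hK
      obtain ⟨ih1, ih2⟩ := ih
      rw [← hk1] at ih1 ih2
      have hP := C.prodDrop_succ k hkn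
      have hT : ∀ p j : Fin n, (C.Ucm * C.prodDrop k) p j
          = (C.Ucm * C.prodDrop (k+1)) p j
            - C.Ucm p K * ∑ r, (C.a K r : ℂ) * C.prodDrop (k+1) r j := by
        intro p j
        rw [hP, Matrix.mul_apply, Matrix.mul_apply]
        have hterm : ∀ q, C.Ucm p q * (C.Smx K * C.prodDrop (k+1)) q j
            = C.Ucm p q * C.prodDrop (k+1) q j
              - (if q = K then C.Ucm p q * ∑ r, (C.a K r : ℂ) * C.prodDrop (k+1) r j
                 else 0) := by
          intro q
          rw [C.aux_Smx_mul]
          by_cases hq : q = K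
          · rw [if_pos hq, if_pos hq, hq]; ring
          · rw [if_neg hq, if_neg hq]; ring
        rw [Finset.sum_congr rfl fun q _ => hterm q, Finset.sum_sub_distrib]
        congr 1
        simp [Finset.sum_ite_eq']
      constructor
      · intro p j hp
        rw [hP, C.aux_Smx_mul]
        have hpK : p ≠ K := by
          intro hEq
          rw [hEq] at hp
          exact lt_irrefl k hp
        rw [if_neg hpK, sub_zero]
        exact ih1 p j (by omega)
      · intro p j hp
        rcases eq_or_lt_of_le hp with hpk | hpk
        · -- p = K
          have hpK : p = K := Fin.ext hpk.symm
          rw [hpK, hT]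
          have hUKK : C.Ucm K K = 1 := by simp [Ucm]
          rw [hUKK, one_mul, Matrix.mul_apply, ← Finset.sum_sub_distrib]
          have hsum : ∀ q, C.Ucm K q * C.prodDrop (k+1) q j
              - (C.a K q : ℂ) * C.prodDrop (k+1) q j
              = -(C.Lcm K q) * (if q = j then 1 else 0) := by
            intro q
            have hstep : C.Ucm K q * C.prodDrop (k+1) q j
                - (C.a K q : ℂ) * C.prodDrop (k+1) q j
                = -(C.Lcm K q) * C.prodDrop (k+1) q j := by
              have := C.aux_ULA K q
              simp only [Acm, Matrix.of_apply] at this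
              rw [← this]
              ring
            rw [hstep]
            by_cases hq : (q : ℕ) < k + 1
            · rw [ih1 q j hq]
            · have hLz : C.Lcm K q = 0 := by
                simp only [Lcm, Matrix.of_apply]
                rw [if_neg, if_neg]
                · intro hlt
                  have : (q : ℕ) < k := hlt
                  omega
                · intro hEq
                  have : (k : ℕ) = (q : ℕ) := congrArg Fin.val hEq
                  omega
              rw [hLz]
              ring
          rw [Finset.sum_congr rfl fun q _ => hsum q]
          simp [Finset.sum_ite_eq', mul_ite]
        · -- K < p
          rw [hT]
          have hUpK : C.Ucm p K = 0 := by
            simp only [Ucm, Matrix.of_apply]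
            rw [if_neg, if_neg]
            · intro hlt
              have : (p : ℕ) < k := hlt
              omega
            · intro hEq
              have : (p : ℕ) = k := congrArg Fin.val hEq
              omega
          rw [hUpK, zero_mul, sub_zero]
          exact ih2 p j (by omega)

lemma aux_UP : C.Ucm * C.prodDrop 0 = -C.Lcm := by
  ext p j
  have h := (C.aux_ind n).2
  rw [Nat.sub_self] at h
  rw [h p j (Nat.zero_le _), Matrix.neg_apply]

lemma aux_Uinj {x : V n} (hx : C.Ucm *ᵥ x = 0) : x = 0 := by
  have hdet : C.Ucm.det = 1 := by
    rw [Matrix.det_of_upperTriangular]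
    · simp [Ucm]
    · intro i j hji
      have hji' : j < i := hji
      simp only [Ucm, Matrix.of_apply]
      rw [if_neg, if_neg (not_lt.mpr (le_of_lt hji'))]
      intro hEq
      rw [hEq] at hji'
      exact lt_irrefl _ hji'
  have hunit : IsUnit C.Ucm := by
    rw [Matrix.isUnit_iff_isUnit_det, hdet]
    exact isUnit_one
  obtain ⟨u, hu⟩ := hunit
  calc x = (↑u⁻¹ * ↑u) *ᵥ x := by rw [u.inv_mul, Matrix.one_mulVec]
  _ = (↑u⁻¹ : Matrix (Fin n) (Fin n) ℂ) *ᵥ (C.Ucm *ᵥ x) := by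
      rw [← Matrix.mulVec_mulVec, hu]
  _ = 0 := by rw [hx, Matrix.mulVec_zero]

lemma aux_toMatrix'_sLin (i : Fin n) : LinearMap.toMatrix' (C.sLin i) = C.Smx i := by
  ext p q
  rw [LinearMap.toMatrix'_apply]
  have : C.sLin i (Pi.single q 1) = α q - (C.a i q : ℂ) • α i := by
    have := C.K_coroot_α i q
    rw [sLin, reflMap_apply]
    rw [show (Pi.single q 1 : V n) = α q from rfl, this]
  rw [this]
  simp only [Pi.sub_apply, Pi.smul_apply, α, Pi.single_apply, smul_eq_mul, Smx, Matrix.of_apply]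
  by_cases h1 : p = q <;> by_cases h2 : p = i <;> simp [h1, h2]

lemma aux_coe_cox : (↑C.cox : V n →ₗ[ℂ] V n) = (List.ofFn C.sLin).prod := by
  have key : ∀ l : List (Fin n),
      (((l.map C.s).prod : V n ≃ₗ[ℂ] V n) : V n →ₗ[ℂ] V n) = (l.map C.sLin).prod := by
    intro l
    induction l with
    | nil => rfl
    | cons a t ih =>
      simp only [List.map_cons, List.prod_cons]
      rw [← ih]
      rfl
  rw [cox, List.ofFn_eq_map, key, ← List.ofFn_eq_map]

lemma aux_toMatrix'_cox :
    LinearMap.toMatrix' (↑C.cox : V n →ₗ[ℂ] V n) = C.prodDrop 0 := by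
  rw [aux_coe_cox]
  unfold prodDrop
  rw [List.drop_zero]
  have hml : ∀ l : List ((V n) →ₗ[ℂ] (V n)),
      LinearMap.toMatrix' l.prod = (l.map LinearMap.toMatrix').prod := by
    intro l
    induction l with
    | nil =>
      rw [List.map_nil, List.prod_nil, List.prod_nil]
      exact LinearMap.toMatrix'_one
    | cons a t ih =>
      rw [List.prod_cons, List.map_cons, List.prod_cons, LinearMap.toMatrix'_mul, ih]
  rw [hml, List.map_ofFn]
  congr 1
  exact congrArg List.ofFn (funext fun i => C.aux_toMatrix'_sLin i)

lemma aux_keyid (v : V n) : C.Ucm *ᵥ (C.cox v - v) = -(C.Acm *ᵥ v) := by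
  have hM : C.Ucm * (C.prodDrop 0 - 1) = -C.Acm := by
    rw [Matrix.mul_sub, Matrix.mul_one, C.aux_UP, ← C.aux_LUA]
    noncomm_ring
  have hcv : C.cox v = C.prodDrop 0 *ᵥ v := by
    have := C.aux_toMatrix'_cox
    have h2 : (↑C.cox : V n →ₗ[ℂ] V n) = Matrix.toLin' (C.prodDrop 0) := by
      rw [← this, Matrix.toLin'_toMatrix']
    calc C.cox v = (↑C.cox : V n →ₗ[ℂ] V n) v := rfl
    _ = Matrix.toLin' (C.prodDrop 0) v := by rw [h2]
    _ = C.prodDrop 0 *ᵥ v := Matrix.toLin'_apply _ v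
  calc C.Ucm *ᵥ (C.cox v - v) = C.Ucm *ᵥ ((C.prodDrop 0 - 1) *ᵥ v) := by
        rw [Matrix.sub_mulVec, Matrix.one_mulVec, hcv]
  _ = (C.Ucm * (C.prodDrop 0 - 1)) *ᵥ v := by rw [Matrix.mulVec_mulVec]
  _ = -(C.Acm *ᵥ v) := by rw [hM, Matrix.neg_mulVec]

/-- the linear functional `χ : y ↦ δᵀ D U y` -/
def chifun (y : V n) : ℂ := ∑ i, ((C.dz i : ℤ) : ℂ) * (C.d i : ℂ) * (C.Ucm *ᵥ y) i

lemma aux_Mrm_mulVec (y : Fin n → ℝ) (i : Fin n) :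
    (C.Mrm *ᵥ y) i = C.d i * (C.Urm *ᵥ y) i := by
  simp only [Matrix.mulVec, dotProduct, Mrm, Matrix.of_apply, Finset.mul_sum]
  exact Finset.sum_congr rfl fun j _ => by ring

lemma aux_chi_cast (y : Fin n → ℝ) :
    C.chifun (fun j => ((y j : ℝ) : ℂ)) = ((C.dzr ⬝ᵥ (C.Mrm *ᵥ y) : ℝ) : ℂ) := by
  unfold chifun
  simp only [dotProduct]
  push_cast
  refine Finset.sum_congr rfl fun i _ => ?_
  rw [C.aux_Ucast y i, C.aux_Mrm_mulVec y i]
  simp only [dzr]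
  push_cast
  ring

lemma aux_chi_comb (a b : ℂ) (x y : V n) :
    C.chifun (a • x + b • y) = a * C.chifun x + b * C.chifun y := by
  unfold chifun
  simp only [Matrix.mulVec_add, Matrix.mulVec_smul, Pi.add_apply, Pi.smul_apply, smul_eq_mul,
    Finset.mul_sum]
  rw [← Finset.sum_add_distrib]
  exact Finset.sum_congr rfl fun i _ => by ring

lemma aux_chi_phi (v : V n) : C.chifun (C.cox v - v) = 0 := by
  unfold chifun
  have hkey := C.aux_keyid v
  rw [hkey]
  have hdzk : ∀ j, ∑ i, ((C.dz i : ℤ) : ℂ) * (C.d i : ℂ) * (C.a i j : ℂ) = 0 := by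
    intro j
    have h := C.dz_ker j
    have h2 : ∑ i, (C.dz i : ℝ) * C.d i * (C.a i j : ℝ) = 0 := by
      rw [← h]
      exact Finset.sum_congr rfl fun i _ => by ring
    exact_mod_cast h2
  have hswap : ∑ i, ((C.dz i : ℤ) : ℂ) * (C.d i : ℂ) * (C.Acm *ᵥ v) i
      = ∑ j, (∑ i, ((C.dz i : ℤ) : ℂ) * (C.d i : ℂ) * (C.a i j : ℂ)) * v j := by
    simp only [Matrix.mulVec, dotProduct, Acm, Matrix.of_apply, Finset.mul_sum]
    rw [Finset.sum_comm]
    refine Finset.sum_congr rfl fun j _ => ?_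
    rw [Finset.sum_mul]
    exact Finset.sum_congr rfl fun i _ => by ring
  calc ∑ i, ((C.dz i : ℤ) : ℂ) * (C.d i : ℂ) * (-(C.Acm *ᵥ v)) i
      = -∑ i, ((C.dz i : ℤ) : ℂ) * (C.d i : ℂ) * (C.Acm *ᵥ v) i := by
        rw [← Finset.sum_neg_distrib]
        exact Finset.sum_congr rfl fun i _ => by simp
  _ = -∑ j, (∑ i, ((C.dz i : ℤ) : ℂ) * (C.d i : ℂ) * (C.a i j : ℂ)) * v j := by rw [hswap]
  _ = 0 := by
        rw [Finset.sum_congr rfl fun j _ => by rw [hdzk j, zero_mul]]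
        simp

end Aux2

section Aux3

open Polynomial

lemma aux_charpoly_shift {m : ℕ} (M : Matrix (Fin m) (Fin m) ℂ) :
    (M - 1).charpoly = M.charpoly.comp (X + Polynomial.C 1) := by
  unfold Matrix.charpoly
  have h2 := AlgHom.map_det (aeval (X + Polynomial.C (1:ℂ)) : ℂ[X] →ₐ[ℂ] ℂ[X]) (Matrix.charmatrix M)
  rw [comp_eq_aeval, h2]
  congr 1
  ext i j
  by_cases h : i = j
  · subst h
    simp [Matrix.charmatrix_apply_eq, Matrix.sub_apply, Matrix.one_apply, AlgHom.mapMatrix_apply]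
    ring
  · simp [Matrix.charmatrix_apply_ne _ _ _ h, Matrix.sub_apply, Matrix.one_apply_ne h,
      AlgHom.mapMatrix_apply]

lemma aux_charpoly_toMatrix' {m : ℕ} (f : (Fin m → ℂ) →ₗ[ℂ] (Fin m → ℂ)) :
    (LinearMap.toMatrix' f).charpoly = f.charpoly := by
  rw [← LinearMap.charpoly_toMatrix f (Pi.basisFun ℂ (Fin m))]
  congr 1

end Aux3

open Matrix in
/-- Proposition 3.1(1): `c` has eigenvalue `1` with algebraic multiplicity `2` and
geometric multiplicity `1`, and `δ` is a `1`-eigenvector. -/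
theorem eigenvalue_one {n : ℕ} (C : AffineGCM n) :
    Polynomial.rootMultiplicity 1 (LinearMap.charpoly (C.cox : V n →ₗ[ℂ] V n)) = 2 ∧
    Module.finrank ℂ (Module.End.eigenspace (C.cox : Module.End ℂ (V n)) 1) = 1 ∧
    C.cox C.δv = C.δv ∧ C.δv ≠ 0 := by
  classical
  have hn := C.aux_npos
  have hδ_ne : C.δv ≠ 0 := by
    intro h
    have h0 := congrFun h ⟨0, hn⟩
    simp only [δv, Pi.zero_apply, Int.cast_eq_zero] at h0
    exact absurd h0 (ne_of_gt (C.dz_pos ⟨0, hn⟩))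
  have hδcast : C.δv = fun j => ((C.dzr j : ℝ) : ℂ) := by
    funext j
    simp [δv, dzr]
  have hKδ : ∀ i : Fin n, (∑ j, (C.a i j : ℂ) * C.δv j) = 0 := by
    intro i
    have h2 : ∑ j, (C.a i j : ℝ) * C.dzr j = 0 := C.aux_a_dz i
    simp only [dzr] at h2
    simp only [δv]
    exact_mod_cast h2
  have hKα : ∀ (i : Fin n) (v : V n),
      C.K (α i) v = (C.d i : ℂ) * ∑ j, (C.a i j : ℂ) * v j := by
    intro i v
    simp only [K, LinearMap.mk₂_apply]
    rw [Finset.sum_eq_single i]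
    · rw [Finset.mul_sum]
      refine Finset.sum_congr rfl fun q _ => ?_
      have : α i i = 1 := Pi.single_eq_same i 1
      rw [show (α i : V n) i = 1 from this]
      ring
    · intro p _ hp
      have : (α i : V n) p = 0 := Pi.single_eq_of_ne hp 1
      rw [this]
      simp
    · intro hmem
      exact absurd (Finset.mem_univ i) hmem
  have hKcor : ∀ (i : Fin n) (v : V n), C.K (C.coroot i) v = ∑ j, (C.a i j : ℂ) * v j := by
    intro i v
    have hd : (C.d i : ℂ) ≠ 0 := by
      exact_mod_cast ne_of_gt (C.d_pos i)
    rw [coroot, _root_.map_smul, LinearMap.smul_apply, hKα, smul_eq_mul]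
    field_simp
  have hs_apply : ∀ (i : Fin n) (v : V n),
      C.s i v = v - (∑ j, (C.a i j : ℂ) * v j) • α i := by
    intro i v
    show C.sLin i v = _
    rw [sLin, reflMap_apply, hKcor]
  have hsδ : ∀ i : Fin n, C.s i C.δv = C.δv := by
    intro i
    rw [hs_apply, hKδ, zero_smul, sub_zero]
  have hcoxδ : C.cox C.δv = C.δv := by
    have hl : ∀ l : List (Fin n), ((l.map C.s).prod) C.δv = C.δv := by
      intro l
      induction l with
      | nil => rfl
      | cons a t ih =>
        rw [List.map_cons, List.prod_cons]
        show C.s a (((t.map C.s).prod) C.δv) = C.δv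
        rw [ih, hsδ]
    show ((List.ofFn C.s).prod) C.δv = C.δv
    rw [List.ofFn_eq_map]
    exact hl _
  obtain ⟨v2, hv2⟩ := C.aux_exists_v2
  set w : V n := fun j => ((v2 j : ℝ) : ℂ) with hw
  have hAv2 : C.Acm *ᵥ w = C.Ucm *ᵥ C.δv := by
    funext i
    have h1 := congrFun hv2 i
    have hBr : (C.Brm *ᵥ v2) i = C.d i * ∑ j, (C.a i j : ℝ) * v2 j := by
      simp only [Matrix.mulVec, dotProduct, Brm, Matrix.of_apply, Finset.mul_sum]
      exact Finset.sum_congr rfl fun j _ => by ring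
    rw [hBr, C.aux_Mrm_mulVec C.dzr i] at h1
    have hdi : C.d i ≠ 0 := ne_of_gt (C.d_pos i)
    have hre : ∑ j, (C.a i j : ℝ) * v2 j = (C.Urm *ᵥ C.dzr) i := mul_left_cancel₀ hdi h1
    have hL : (C.Acm *ᵥ w) i = ((∑ j, (C.a i j : ℝ) * v2 j : ℝ) : ℂ) := by
      simp only [Matrix.mulVec, dotProduct, Acm, Matrix.of_apply, hw]
      push_cast
      rfl
    rw [hδcast, C.aux_Ucast C.dzr i, hL, hre]
  set φ : Module.End ℂ (V n) := (C.cox : V n →ₗ[ℂ] V n) - 1 with hφdef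
  have hφ_apply : ∀ v : V n, φ v = C.cox v - v := fun v => rfl
  have key : ∀ v : V n, C.Ucm *ᵥ (φ v) = -(C.Acm *ᵥ v) := by
    intro v
    rw [hφ_apply]
    exact C.aux_keyid v
  have hφδ : φ C.δv = 0 := by rw [hφ_apply, hcoxδ, sub_self]
  have hkerφ : ∀ v : V n, φ v = 0 → ∃ t : ℂ, v = t • C.δv := by
    intro v hv
    have h1 : C.Acm *ᵥ v = 0 := by
      have h2 := key v
      rw [hv, Matrix.mulVec_zero] at h2
      exact neg_eq_zero.mp h2.symm
    exact C.aux_kerc h1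
  have hφw : φ w = -C.δv := by
    have h1 : C.Ucm *ᵥ (φ w + C.δv) = 0 := by
      rw [Matrix.mulVec_add, key w, hAv2, neg_add_cancel]
    exact eq_neg_of_add_eq_zero_left (C.aux_Uinj h1)
  have hχφ : ∀ v : V n, C.chifun (φ v) = 0 := by
    intro v
    rw [hφ_apply]
    exact C.aux_chi_phi v
  have hχδ : C.chifun C.δv = 0 := by
    rw [hδcast, C.aux_chi_cast, C.aux_dzMdz]
    exact Complex.ofReal_zero
  have hχw : C.chifun w ≠ 0 := by
    rw [hw, C.aux_chi_cast]
    exact Complex.ofReal_ne_zero.mpr (C.aux_keyreal hv2)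
  have heig : Module.End.eigenspace (C.cox : Module.End ℂ (V n)) 1 = Submodule.span ℂ {C.δv} := by
    ext x
    rw [Module.End.mem_eigenspace_iff, Submodule.mem_span_singleton]
    constructor
    · intro hx
      rw [one_smul] at hx
      have h1 : φ x = 0 := by rw [hφ_apply, show C.cox x = x from hx, sub_self]
      obtain ⟨t, ht⟩ := hkerφ x h1
      exact ⟨t, ht.symm⟩
    · rintro ⟨t, rfl⟩
      rw [one_smul, _root_.map_smul]
      exact congrArg (fun y => t • y) hcoxδ
  have hker2 : ∀ v : V n, (φ ^ 2) v = 0 ↔ v ∈ Submodule.span ℂ {C.δv, w} := by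
    intro v
    rw [pow_two, Module.End.mul_apply]
    constructor
    · intro hv
      obtain ⟨t, ht⟩ := hkerφ (φ v) hv
      have h3 : φ (v + t • w) = 0 := by
        rw [_root_.map_add, _root_.map_smul, hφw, ht, smul_neg]
        exact add_neg_cancel _
      obtain ⟨u, hu⟩ := hkerφ _ h3
      rw [Submodule.mem_span_pair]
      refine ⟨u, -t, ?_⟩
      rw [neg_smul, ← hu]
      abel
    · intro hv
      rw [Submodule.mem_span_pair] at hv
      obtain ⟨a, b, rfl⟩ := hv
      rw [_root_.map_add, _root_.map_smul, _root_.map_smul, hφδ, hφw, smul_zero, zero_add, smul_neg, _root_.map_neg,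
        _root_.map_smul, hφδ, smul_zero, neg_zero]
  have hstab : ∀ (k : ℕ) (v : V n), (φ ^ (k + 2)) v = 0 → (φ ^ 2) v = 0 := by
    intro k
    induction k with
    | zero => exact fun v hv => hv
    | succ k ih =>
      intro v hv
      have hkk : k + 1 + 2 = (k + 2) + 1 := by omega
      rw [hkk, pow_succ, Module.End.mul_apply] at hv
      have h2 := ih (φ v) hv
      rw [hker2 (φ v), Submodule.mem_span_pair] at h2
      obtain ⟨a, b, hab⟩ := h2
      have h3 : C.chifun (φ v) = 0 := hχφ v
      rw [← hab, C.aux_chi_comb, hχδ, mul_zero, zero_add] at h3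
      have hb : b = 0 := by
        rcases mul_eq_zero.mp h3 with h | h
        · exact h
        · exact absurd h hχw
      have h4 : φ v = a • C.δv := by rw [← hab, hb, zero_smul, add_zero]
      rw [pow_two, Module.End.mul_apply, h4, _root_.map_smul, hφδ, smul_zero]
  have hmax : φ.maxGenEigenspace 0 = Submodule.span ℂ {C.δv, w} := by
    ext x
    rw [Module.End.mem_maxGenEigenspace]
    simp only [zero_smul, sub_zero]
    constructor
    · rintro ⟨k, hk⟩
      have h1 : (φ ^ (k + 2)) x = 0 := by
        have hkk : k + 2 = 2 + k := by omega
        rw [hkk, pow_add, Module.End.mul_apply, hk, _root_.map_zero]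
      exact (hker2 x).mp (hstab k x h1)
    · intro hx
      exact ⟨2, (hker2 x).mpr hx⟩
  have hli : LinearIndependent ℂ ![C.δv, w] := by
    rw [LinearIndependent.pair_iff]
    intro s t hst
    have h1 : φ (s • C.δv + t • w) = 0 := by rw [hst, _root_.map_zero]
    rw [_root_.map_add, _root_.map_smul, _root_.map_smul, hφδ, hφw, smul_zero, zero_add, smul_neg] at h1
    have ht : t = 0 := by
      rcases smul_eq_zero.mp (neg_eq_zero.mp h1) with h | h
      · exact h
      · exact absurd h hδ_ne
    refine ⟨?_, ht⟩
    rw [ht, zero_smul, add_zero] at hst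
    rcases smul_eq_zero.mp hst with h | h
    · exact h
    · exact absurd h hδ_ne
  have hfr2 : Module.finrank ℂ (Submodule.span ℂ {C.δv, w}) = 2 := by
    have h := finrank_span_eq_card hli
    rw [show Set.range ![C.δv, w] = {C.δv, w} by
      simp [Matrix.range_cons, Matrix.range_empty, Set.pair_comm w C.δv]] at h
    simpa using h
  have hchar : Polynomial.rootMultiplicity 1 (LinearMap.charpoly (C.cox : V n →ₗ[ℂ] V n)) = 2 := by
    rw [Polynomial.rootMultiplicity_eq_natTrailingDegree]
    have hshift : (LinearMap.charpoly (C.cox : V n →ₗ[ℂ] V n)).comp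
        (Polynomial.X + Polynomial.C 1) = LinearMap.charpoly φ := by
      rw [← aux_charpoly_toMatrix' ((C.cox : V n →ₗ[ℂ] V n)), ← aux_charpoly_toMatrix' (φ : V n →ₗ[ℂ] V n)]
      have hm : LinearMap.toMatrix' (φ : V n →ₗ[ℂ] V n)
          = LinearMap.toMatrix' ((C.cox : V n →ₗ[ℂ] V n)) - 1 := by
        rw [hφdef, _root_.map_sub, LinearMap.toMatrix'_one]
      rw [hm, aux_charpoly_shift]
    rw [hshift, ← LinearMap.finrank_maxGenEigenspace_zero_eq, hmax, hfr2]
  refine ⟨hchar, ?_, hcoxδ, hδ_ne⟩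
  rw [heig]
  exact finrank_span_singleton hδ_ne

end AffineGCM
end
end
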